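/- Variational characterisation of the discrete mid-point Hamiltonian system: let H : ℝ^d × ℝ^d → ℝ be differentiable and define, for p, q : {0,…,N} → ℝ^d, the discrete action 𝓐(p,q) = Σ_{i=0}^{N−1} h·[⟨p_{∘,i+½}, (q_{i+1} − q_i)/h⟩ − H(p_{∘,i+½}, q_{∘,i+½})], where p_{∘,i+½} = (p_i + p_{i+1})/2 and q_{∘,i+½} = (q_i + q_{i+1})/2. Then (p,q) is a critical point of 𝓐 — meaning that for every w : {0,…,N} → ℝ^d and every v : {0,…,N} → ℝ^d with v_0 = v_N = 0, the map ε ↦ 𝓐(p + ε w, q + ε v) has derivative 0 at ε = 0 — if and only if both: (i) (p_{∘,i+½} − p_{∘,i−½})/h = −(1/2)[∂H/∂q(p_{∘,i+½}, q_{∘,i+½}) + ∂H/∂q(p_{∘,i−½}, q_{∘,i−½})] for all i = 1,…,N−1, and (ii) (q_{i+1} − q_i)/h = ∂H/∂p(p_{∘,i+½}, q_{∘,i+½}) for all i = 0,…,N−1. -/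

import Mathlib

open scoped RealInnerProductSpace

/-- Gradient of `H` in its first (momentum) variable. -/
noncomputable def gradHp (d : ℕ)
    (H : EuclideanSpace ℝ (Fin d) × EuclideanSpace ℝ (Fin d) → ℝ)
    (a b : EuclideanSpace ℝ (Fin d)) : EuclideanSpace ℝ (Fin d) :=
  gradient (fun x => H (x, b)) a

/-- Gradient of `H` in its second (position) variable. -/
noncomputable def gradHq (d : ℕ)
    (H : EuclideanSpace ℝ (Fin d) × EuclideanSpace ℝ (Fin d) → ℝ)
    (a b : EuclideanSpace ℝ (Fin d)) : EuclideanSpace ℝ (Fin d) :=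
  gradient (fun y => H (a, y)) b

/-- Mid-point value `u_{∘,i+½} = (u_i + u_{i+1})/2` of a sequence. -/
noncomputable def mid (d : ℕ) (u : ℕ → EuclideanSpace ℝ (Fin d)) (i : ℕ) :
    EuclideanSpace ℝ (Fin d) :=
  (2 : ℝ)⁻¹ • (u i + u (i + 1))

section Helpers

variable {d : ℕ}

lemma inner_gradient_eq (f : EuclideanSpace ℝ (Fin d) → ℝ) (x u : EuclideanSpace ℝ (Fin d)) :
    ⟪gradient f x, u⟫ = fderiv ℝ f x u := by
  simp [gradient, InnerProductSpace.toDual_symm_apply]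

lemma fderiv_H_eq (H : EuclideanSpace ℝ (Fin d) × EuclideanSpace ℝ (Fin d) → ℝ)
    (hH : Differentiable ℝ H) (a b u v : EuclideanSpace ℝ (Fin d)) :
    fderiv ℝ H (a, b) (u, v) = ⟪gradHp d H a b, u⟫ + ⟪gradHq d H a b, v⟫ := by
  have h1 : HasFDerivAt (fun x : EuclideanSpace ℝ (Fin d) => H (x, b))
      ((fderiv ℝ H (a, b)).comp (ContinuousLinearMap.inl ℝ _ _)) a :=
    (hH (a, b)).hasFDerivAt.comp a (hasFDerivAt_prodMk_left a b)
  have h2 : HasFDerivAt (fun y : EuclideanSpace ℝ (Fin d) => H (a, y))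
      ((fderiv ℝ H (a, b)).comp (ContinuousLinearMap.inr ℝ _ _)) b :=
    (hH (a, b)).hasFDerivAt.comp b (hasFDerivAt_prodMk_right a b)
  rw [gradHp, gradHq, inner_gradient_eq, inner_gradient_eq, h1.fderiv, h2.fderiv]
  have huv : ((u, v) : EuclideanSpace ℝ (Fin d) × EuclideanSpace ℝ (Fin d)) = (u, 0) + (0, v) := by
    simp
  rw [huv, map_add]
  simp [ContinuousLinearMap.comp_apply]

lemma hasDerivAt_line (a c : EuclideanSpace ℝ (Fin d)) :
    HasDerivAt (fun ε : ℝ => a + ε • c) c 0 := by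
  simpa using ((hasDerivAt_id (0:ℝ)).smul_const c).const_add a

lemma action_deriv (N : ℕ) (h : ℝ)
    (H : EuclideanSpace ℝ (Fin d) × EuclideanSpace ℝ (Fin d) → ℝ)
    (hH : Differentiable ℝ H) (p q w v : ℕ → EuclideanSpace ℝ (Fin d)) :
    HasDerivAt
      (fun ε : ℝ => ∑ i ∈ Finset.range N,
        h * (⟪(2 : ℝ)⁻¹ • ((p i + ε • w i) + (p (i + 1) + ε • w (i + 1))),
              h⁻¹ • ((q (i + 1) + ε • v (i + 1)) - (q i + ε • v i))⟫
          - H ((2 : ℝ)⁻¹ • ((p i + ε • w i) + (p (i + 1) + ε • w (i + 1))),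
               (2 : ℝ)⁻¹ • ((q i + ε • v i) + (q (i + 1) + ε • v (i + 1))))))
      (∑ i ∈ Finset.range N,
        h * ((⟪mid d p i, h⁻¹ • (v (i + 1) - v i)⟫
              + ⟪(2:ℝ)⁻¹ • (w i + w (i + 1)), h⁻¹ • (q (i + 1) - q i)⟫)
          - (⟪gradHp d H (mid d p i) (mid d q i), (2:ℝ)⁻¹ • (w i + w (i + 1))⟫
             + ⟪gradHq d H (mid d p i) (mid d q i), (2:ℝ)⁻¹ • (v i + v (i + 1))⟫))) 0 := by
  apply HasDerivAt.fun_sum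
  intro i _
  have hA : HasDerivAt (fun ε : ℝ => (2:ℝ)⁻¹ • ((p i + ε • w i) + (p (i + 1) + ε • w (i + 1))))
      ((2:ℝ)⁻¹ • (w i + w (i + 1))) 0 :=
    ((hasDerivAt_line (p i) (w i)).fun_add (hasDerivAt_line (p (i+1)) (w (i+1)))).fun_const_smul _
  have hB : HasDerivAt (fun ε : ℝ => h⁻¹ • ((q (i + 1) + ε • v (i + 1)) - (q i + ε • v i)))
      (h⁻¹ • (v (i + 1) - v i)) 0 :=
    ((hasDerivAt_line (q (i+1)) (v (i+1))).fun_sub (hasDerivAt_line (q i) (v i))).fun_const_smul _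
  have hC : HasDerivAt (fun ε : ℝ => (2:ℝ)⁻¹ • ((q i + ε • v i) + (q (i + 1) + ε • v (i + 1))))
      ((2:ℝ)⁻¹ • (v i + v (i + 1))) 0 :=
    ((hasDerivAt_line (q i) (v i)).fun_add (hasDerivAt_line (q (i+1)) (v (i+1)))).fun_const_smul _
  have hHd := (hH _).hasFDerivAt.comp_hasDerivAt 0 (hA.prodMk hC)
  have key := (((hA.inner ℝ hB).fun_sub hHd).const_mul h)
  simp only [Function.comp] at key
  convert key using 1
  · rfl
  have hfd := fderiv_H_eq H hH ((2:ℝ)⁻¹ • (p i + p (i+1))) ((2:ℝ)⁻¹ • (q i + q (i+1)))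
      ((2:ℝ)⁻¹ • (w i + w (i + 1))) ((2:ℝ)⁻¹ • (v i + v (i + 1)))
  simp only [zero_smul, add_zero, mid] at *
  rw [hfd]

lemma term_v (h : ℝ) (hh : h ≠ 0) (P G x y : EuclideanSpace ℝ (Fin d)) :
    h * (⟪P, h⁻¹ • (y - x)⟫ - ⟪G, (2:ℝ)⁻¹ • (x + y)⟫)
      = ⟪y, P - (h/2) • G⟫ - ⟪x, P + (h/2) • G⟫ := by
  simp only [inner_sub_right, inner_add_right, real_inner_smul_right,
    real_inner_comm y P, real_inner_comm x P, real_inner_comm y G, real_inner_comm x G]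
  field_simp
  ring

lemma term_w (h : ℝ) (hh : h ≠ 0) (G c u1 u2 : EuclideanSpace ℝ (Fin d)) :
    h * (⟪(2:ℝ)⁻¹ • (u1 + u2), h⁻¹ • c⟫ - ⟪G, (2:ℝ)⁻¹ • (u1 + u2)⟫)
      = (h/2) * ⟪u1, h⁻¹ • c - G⟫ + (h/2) * ⟪u2, h⁻¹ • c - G⟫ := by
  simp only [inner_sub_right, inner_add_right, inner_add_left, real_inner_smul_right,
    real_inner_smul_left, real_inner_comm G u1, real_inner_comm G u2]
  field_simp
  ring

lemma inner_forall_zero {c : EuclideanSpace ℝ (Fin d)} (hc : ∀ x, ⟪x, c⟫ = 0) : c = 0 :=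
  inner_self_eq_zero.mp (hc c)

lemma delta_sum (N j : ℕ) (c : ℕ → EuclideanSpace ℝ (Fin d)) (x : EuclideanSpace ℝ (Fin d)) :
    ∑ i ∈ Finset.range N, ⟪(if i = j then x else 0), c i⟫
      = if j ∈ Finset.range N then ⟪x, c j⟫ else 0 := by
  rw [← Finset.sum_ite_eq' (Finset.range N) j (fun i => ⟪x, c i⟫)]
  exact Finset.sum_congr rfl fun i _ => by split_ifs <;> simp

lemma delta_sum_succ (N k : ℕ) (c : ℕ → EuclideanSpace ℝ (Fin d)) (x : EuclideanSpace ℝ (Fin d)) :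
    ∑ i ∈ Finset.range N, ⟪(if i + 1 = k + 1 then x else 0), c i⟫
      = if k ∈ Finset.range N then ⟪x, c k⟫ else 0 := by
  rw [← delta_sum N k c x]
  exact Finset.sum_congr rfl fun i _ => by
    rw [if_congr (by omega : (i + 1 = k + 1) ↔ (i = k)) rfl rfl]

end Helpers

/-- variational characterisation of the discrete mid-point
Hamiltonian system. -/
theorem variational_characterisation_midpoint_hamiltonian
    (d N : ℕ) (hN : 2 ≤ N) (h : ℝ) (hh : 0 < h)
    (H : EuclideanSpace ℝ (Fin d) × EuclideanSpace ℝ (Fin d) → ℝ)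
    (hH : Differentiable ℝ H)
    (p q : ℕ → EuclideanSpace ℝ (Fin d)) :
    (∀ w v : ℕ → EuclideanSpace ℝ (Fin d), v 0 = 0 → v N = 0 →
      HasDerivAt
        (fun ε : ℝ => ∑ i ∈ Finset.range N,
          h * (⟪(2 : ℝ)⁻¹ • ((p i + ε • w i) + (p (i + 1) + ε • w (i + 1))),
                h⁻¹ • ((q (i + 1) + ε • v (i + 1)) - (q i + ε • v i))⟫
            - H ((2 : ℝ)⁻¹ • ((p i + ε • w i) + (p (i + 1) + ε • w (i + 1))),
                 (2 : ℝ)⁻¹ • ((q i + ε • v i) + (q (i + 1) + ε • v (i + 1))))))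
        0 0)
    ↔ ((∀ i, 1 ≤ i → i ≤ N - 1 →
          h⁻¹ • (mid d p i - mid d p (i - 1))
            = -(2 : ℝ)⁻¹ • (gradHq d H (mid d p i) (mid d q i)
                            + gradHq d H (mid d p (i - 1)) (mid d q (i - 1))))
        ∧ (∀ i < N,
          h⁻¹ • (q (i + 1) - q i) = gradHp d H (mid d p i) (mid d q i))) := by
  have hne : h ≠ 0 := ne_of_gt hh
  constructor
  · intro crit
    have Dzero : ∀ w v : ℕ → EuclideanSpace ℝ (Fin d), v 0 = 0 → v N = 0 →
        (∑ i ∈ Finset.range N,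
          h * ((⟪mid d p i, h⁻¹ • (v (i + 1) - v i)⟫
              + ⟪(2:ℝ)⁻¹ • (w i + w (i + 1)), h⁻¹ • (q (i + 1) - q i)⟫)
            - (⟪gradHp d H (mid d p i) (mid d q i), (2:ℝ)⁻¹ • (w i + w (i + 1))⟫
               + ⟪gradHq d H (mid d p i) (mid d q i), (2:ℝ)⁻¹ • (v i + v (i + 1))⟫))) = 0 :=
      fun w v h0 hNv => (action_deriv N h H hH p q w v).unique (crit w v h0 hNv)
    have main_w : ∀ (j : ℕ) (x : EuclideanSpace ℝ (Fin d)),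
        (∑ i ∈ Finset.range N, (h/2) * ⟪(if i = j then x else 0),
            h⁻¹ • (q (i + 1) - q i) - gradHp d H (mid d p i) (mid d q i)⟫)
        + (∑ i ∈ Finset.range N, (h/2) * ⟪(if i + 1 = j then x else 0),
            h⁻¹ • (q (i + 1) - q i) - gradHp d H (mid d p i) (mid d q i)⟫) = 0 := by
      intro j x
      have hsum := Dzero (fun k => if k = j then x else 0) 0 rfl rfl
      simp only [Pi.zero_apply, sub_self, smul_zero, inner_zero_right, add_zero,
        zero_add] at hsum
      rw [← hsum, ← Finset.sum_add_distrib]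
      exact Finset.sum_congr rfl fun i _ =>
        (term_w h hne (gradHp d H (mid d p i) (mid d q i)) (q (i + 1) - q i) _ _).symm
    have hE : ∀ j < N,
        h⁻¹ • (q (j + 1) - q j) - gradHp d H (mid d p j) (mid d q j) = 0 := by
      intro j
      induction j with
      | zero =>
        intro hj
        apply inner_forall_zero; intro x
        have hmw := main_w 0 x
        have h2 : ∑ i ∈ Finset.range N, (h/2) * ⟪(if i + 1 = 0 then x else (0 : EuclideanSpace ℝ (Fin d))),
            h⁻¹ • (q (i + 1) - q i) - gradHp d H (mid d p i) (mid d q i)⟫ = 0 := by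
          apply Finset.sum_eq_zero; intro i _
          rw [if_neg (by omega)]; simp
        rw [h2, add_zero, ← Finset.mul_sum, delta_sum,
          if_pos (Finset.mem_range.mpr hj)] at hmw
        rcases mul_eq_zero.mp hmw with h' | h'
        · exact absurd h' (div_ne_zero hne two_ne_zero)
        · exact h'
      | succ k ih =>
        intro hj
        have hk := ih (by omega)
        apply inner_forall_zero; intro x
        have hmw := main_w (k + 1) x
        rw [← Finset.mul_sum, ← Finset.mul_sum, delta_sum, delta_sum_succ,
          if_pos (Finset.mem_range.mpr hj), if_pos (Finset.mem_range.mpr (by omega : k < N))] at hmw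
        rw [hk] at hmw
        simp only [inner_zero_right, mul_zero, add_zero] at hmw
        rcases mul_eq_zero.mp hmw with h' | h'
        · exact absurd h' (div_ne_zero hne two_ne_zero)
        · exact h'
    have hii : ∀ i < N, h⁻¹ • (q (i + 1) - q i) = gradHp d H (mid d p i) (mid d q i) :=
      fun j hj => sub_eq_zero.mp (hE j hj)
    refine ⟨?_, hii⟩
    intro i h1 h2
    obtain ⟨k, rfl⟩ : ∃ k, i = k + 1 := ⟨i - 1, by omega⟩
    simp only [Nat.add_sub_cancel]
    have main_v : ∀ x : EuclideanSpace ℝ (Fin d),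
        (∑ i ∈ Finset.range N, ⟪(if i + 1 = k + 1 then x else 0),
            mid d p i - (h/2) • gradHq d H (mid d p i) (mid d q i)⟫)
        - (∑ i ∈ Finset.range N, ⟪(if i = k + 1 then x else 0),
            mid d p i + (h/2) • gradHq d H (mid d p i) (mid d q i)⟫) = 0 := by
      intro x
      have hv0 : (fun m => if m = k + 1 then x else (0 : EuclideanSpace ℝ (Fin d))) 0 = 0 := by
        simp
      have hvN : (fun m => if m = k + 1 then x else (0 : EuclideanSpace ℝ (Fin d))) N = 0 := by
        show (if N = k + 1 then x else (0 : EuclideanSpace ℝ (Fin d))) = 0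
        rw [if_neg (by omega)]
      have hsum := Dzero 0 (fun m => if m = k + 1 then x else 0) hv0 hvN
      simp only [Pi.zero_apply, add_zero, zero_add, smul_zero, inner_zero_left,
        inner_zero_right] at hsum
      rw [← hsum, ← Finset.sum_sub_distrib]
      exact Finset.sum_congr rfl fun i _ =>
        (term_v h hne (mid d p i) (gradHq d H (mid d p i) (mid d q i)) _ _).symm
    have vec : (mid d p k - (h/2) • gradHq d H (mid d p k) (mid d q k))
        - (mid d p (k+1) + (h/2) • gradHq d H (mid d p (k+1)) (mid d q (k+1))) = 0 := by
      apply inner_forall_zero; intro x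
      have hmv := main_v x
      rw [delta_sum_succ, delta_sum, if_pos (Finset.mem_range.mpr (by omega : k < N)),
        if_pos (Finset.mem_range.mpr (by omega : k + 1 < N))] at hmv
      rw [inner_sub_right]
      exact hmv
    have hbridge : h⁻¹ • (mid d p (k+1) - mid d p k)
        - (-(2:ℝ)⁻¹ • (gradHq d H (mid d p (k+1)) (mid d q (k+1))
            + gradHq d H (mid d p k) (mid d q k)))
        = -h⁻¹ • ((mid d p k - (h/2) • gradHq d H (mid d p k) (mid d q k))
            - (mid d p (k+1) + (h/2) • gradHq d H (mid d p (k+1)) (mid d q (k+1)))) := by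
      match_scalars <;> field_simp
    rw [vec, smul_zero] at hbridge
    exact sub_eq_zero.mp hbridge
  · rintro ⟨Hi, Hii⟩ w v hv0 hvN
    have hd := action_deriv N h H hH p q w v
    have hz : (∑ i ∈ Finset.range N,
        h * ((⟪mid d p i, h⁻¹ • (v (i + 1) - v i)⟫
              + ⟪(2:ℝ)⁻¹ • (w i + w (i + 1)), h⁻¹ • (q (i + 1) - q i)⟫)
          - (⟪gradHp d H (mid d p i) (mid d q i), (2:ℝ)⁻¹ • (w i + w (i + 1))⟫
             + ⟪gradHq d H (mid d p i) (mid d q i), (2:ℝ)⁻¹ • (v i + v (i + 1))⟫))) = 0 := by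
      have step1 : ∀ i ∈ Finset.range N,
          h * ((⟪mid d p i, h⁻¹ • (v (i + 1) - v i)⟫
              + ⟪(2:ℝ)⁻¹ • (w i + w (i + 1)), h⁻¹ • (q (i + 1) - q i)⟫)
            - (⟪gradHp d H (mid d p i) (mid d q i), (2:ℝ)⁻¹ • (w i + w (i + 1))⟫
               + ⟪gradHq d H (mid d p i) (mid d q i), (2:ℝ)⁻¹ • (v i + v (i + 1))⟫))
          = ⟪v (i + 1), mid d p i - (h/2) • gradHq d H (mid d p i) (mid d q i)⟫
            - ⟪v i, mid d p i + (h/2) • gradHq d H (mid d p i) (mid d q i)⟫ := by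
        intro i hi
        rw [Finset.mem_range] at hi
        rw [Hii i hi,
          real_inner_comm ((2:ℝ)⁻¹ • (w i + w (i + 1))) (gradHp d H (mid d p i) (mid d q i))]
        have hring : ∀ A C D2 : ℝ, h * ((A + C) - (C + D2)) = h * (A - D2) := by
          intros; ring
        rw [hring]
        exact term_v h hne _ _ _ _
      rw [Finset.sum_congr rfl step1]
      set F : ℕ → ℝ := fun j => ⟪v j, mid d p (j - 1)
          - (h/2) • gradHq d H (mid d p (j - 1)) (mid d q (j - 1))⟫ with hF
      have hFshift : ∀ i : ℕ, ⟪v (i + 1), mid d p i - (h/2) • gradHq d H (mid d p i) (mid d q i)⟫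
          = F (i + 1) := fun i => rfl
      have hF0 : F 0 = 0 := by rw [hF]; simp [hv0]
      have hFN : F N = 0 := by rw [hF]; simp [hvN]
      have htel : ∑ i ∈ Finset.range N, F (i + 1) = ∑ i ∈ Finset.range N, F i := by
        have := Finset.sum_range_succ' F N
        rw [Finset.sum_range_succ] at this
        -- this : ∑ range N F + F N = ∑ range N (F (·+1)) + F 0
        rw [hF0, hFN, add_zero, add_zero] at this
        exact this.symm
      calc ∑ i ∈ Finset.range N,
            (⟪v (i + 1), mid d p i - (h/2) • gradHq d H (mid d p i) (mid d q i)⟫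
            - ⟪v i, mid d p i + (h/2) • gradHq d H (mid d p i) (mid d q i)⟫)
          = ∑ i ∈ Finset.range N,
            (F (i + 1) - ⟪v i, mid d p i + (h/2) • gradHq d H (mid d p i) (mid d q i)⟫) := by
            exact Finset.sum_congr rfl fun i _ => by rw [hFshift]
        _ = ∑ i ∈ Finset.range N, F (i + 1)
            - ∑ i ∈ Finset.range N, ⟪v i, mid d p i + (h/2) • gradHq d H (mid d p i) (mid d q i)⟫ := by
            rw [Finset.sum_sub_distrib]
        _ = ∑ i ∈ Finset.range N,
            (F i - ⟪v i, mid d p i + (h/2) • gradHq d H (mid d p i) (mid d q i)⟫) := by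
            rw [htel, Finset.sum_sub_distrib]
        _ = 0 := by
            apply Finset.sum_eq_zero
            intro i hi
            rw [Finset.mem_range] at hi
            cases i with
            | zero => simp [hF, hv0]
            | succ k =>
              have Hi' := Hi (k + 1) (by omega) (by omega)
              simp only [Nat.add_sub_cancel] at Hi'
              simp only [hF, Nat.add_sub_cancel]
              rw [← inner_sub_right]
              have hbridge : mid d p k
                  - (h/2) • gradHq d H (mid d p k) (mid d q k)
                  - (mid d p (k+1) + (h/2) • gradHq d H (mid d p (k+1)) (mid d q (k+1)))
                  = -h • (h⁻¹ • (mid d p (k+1) - mid d p k)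
                    - (-(2:ℝ)⁻¹ • (gradHq d H (mid d p (k+1)) (mid d q (k+1))
                        + gradHq d H (mid d p k) (mid d q k)))) := by
                match_scalars <;> field_simp
              rw [hbridge, Hi', sub_self, smul_zero, inner_zero_right]
    rwa [hz] at hd
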